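/- Let 0 < β₁ < 1, 0 < β₂ < 1, and set κ = (1−β₁)(1+β₂)/(4β₂), γ = (1+3β₂)/(2β₂), ξ* = 1/(2β₁) − 1/(2β₂). Let f : (0,∞) → ℝ be continuously differentiable, and assume there exist C, c > 0 such that |f(x)| ≤ C for all x > 0, |f'(x)| ≤ C/x for 0 < x ≤ 1, and |f(x)| + |f'(x)| ≤ C e^{−cx} for x ≥ 1. Define A f(x) = −β₁ f'(x) + ∫_0^∞ (f(x+a) − f(x)) (κ/x²)(1 + a/x)^{−γ} da for x > 0. Then for every complex ξ with Re ξ > 1, the Mellin transforms M[Af](ξ) and M[f](ξ−1) converge absolutely and M[Af](ξ) = (β₁(ξ−1)(ξ−ξ*)/(ξ+γ−2)) · M[f](ξ−1). -/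

import Mathlib

open MeasureTheory

namespace MellinGenAux
open Set Filter Complex



lemma hasDerivAt_ofReal_cpow_pos {x : ℝ} (hx : 0 < x) (s : ℂ) :
    HasDerivAt (fun y : ℝ => (y:ℂ) ^ s) (s * (x:ℂ) ^ (s-1)) x := by
  have h := ((Complex.hasStrictDerivAt_cpow_const
    (x := (x:ℂ)) (c := s) (Complex.ofReal_mem_slitPlane.2 hx)).hasDerivAt).comp_ofReal
  simpa using h

lemma contOn_cpow (s : ℂ) : ContinuousOn (fun t : ℝ => ((1+t:ℝ):ℂ) ^ s) (Ici 0) := by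
  intro t ht
  apply ContinuousWithinAt.cpow
  · exact (Complex.continuous_ofReal.comp (continuous_const.add continuous_id)).continuousWithinAt
  · exact continuousWithinAt_const
  · exact Complex.ofReal_mem_slitPlane.2 (by simp at ht ⊢; linarith)

lemma norm_cpow_real {x : ℝ} (hx : 0 < x) (s : ℂ) : ‖(x:ℂ) ^ s‖ = x ^ s.re := by
  rw [Complex.norm_cpow_eq_rpow_re_of_pos hx]

lemma tail_integrable (p : ℂ) (hp : 1 < p.re) :
    IntegrableOn (fun t : ℝ => ((1+t:ℝ):ℂ) ^ (-p)) (Ioi 0) := by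
  have hmeas : ContinuousOn (fun t : ℝ => ((1+t:ℝ):ℂ) ^ (-p)) (Ici 0) := contOn_cpow (-p)
  rw [show Ioi (0:ℝ) = Ioc 0 1 ∪ Ioi 1 by rw [Ioc_union_Ioi_eq_Ioi]; norm_num]
  apply IntegrableOn.union
  · apply Integrable.mono (integrable_const (1:ℝ))
      ((hmeas.mono (Ioc_subset_Icc_self.trans Icc_subset_Ici_self)).aestronglyMeasurable
        measurableSet_Ioc)
    filter_upwards [ae_restrict_mem measurableSet_Ioc] with t ht
    have h1t : (0:ℝ) < 1 + t := by linarith [ht.1]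
    rw [norm_cpow_real h1t]
    simp only [Complex.neg_re, norm_one]
    calc (1+t) ^ (-p.re) ≤ (1+t) ^ (0:ℝ) :=
          Real.rpow_le_rpow_of_exponent_le (by linarith [ht.1]) (by linarith)
      _ = 1 := Real.rpow_zero _
  · apply Integrable.mono (integrableOn_Ioi_rpow_of_lt (a := -p.re) (by linarith) zero_lt_one)
      ((hmeas.mono fun t (ht : t ∈ Ioi (1:ℝ)) => mem_Ici.2 (by linarith [mem_Ioi.1 ht])).aestronglyMeasurable
        measurableSet_Ioi)
    filter_upwards [ae_restrict_mem measurableSet_Ioi] with t ht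
    have ht1 : (1:ℝ) < t := ht
    have h1t : (0:ℝ) < 1 + t := by linarith
    rw [norm_cpow_real h1t, Real.norm_of_nonneg (Real.rpow_nonneg (by linarith) _)]
    simp only [Complex.neg_re]
    exact Real.rpow_le_rpow_of_nonpos (by linarith) (by linarith) (by linarith)

lemma tail_hasDeriv (p : ℂ) (hne : (1:ℂ) - p ≠ 0) {t : ℝ} (ht : 0 < 1 + t) :
    HasDerivAt (fun t : ℝ => ((1+t:ℝ):ℂ) ^ (1-p) / (1-p)) (((1+t:ℝ):ℂ) ^ (-p)) t := by
  have hinner : HasDerivAt (fun t : ℝ => (1:ℝ) + t) 1 t := by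
    simpa using (hasDerivAt_id t).const_add (1:ℝ)
  have houter := hasDerivAt_ofReal_cpow_pos ht (1-p)
  have h := (houter.scomp t hinner).div_const (1-p)
  refine h.congr_deriv ?_
  rw [one_smul, mul_comm, mul_div_assoc, div_self hne, mul_one]
  congr 1
  ring

lemma tail_integral (p : ℂ) (hp : 1 < p.re) :
    ∫ t in Ioi (0:ℝ), ((1+t:ℝ):ℂ) ^ (-p) = 1/(p-1) := by
  have hne : (1:ℂ) - p ≠ 0 := by
    intro h
    have := congrArg Complex.re h
    simp at this; linarith
  have hcont : ContinuousWithinAt (fun t : ℝ => ((1+t:ℝ):ℂ) ^ (1-p) / (1-p)) (Ici 0) 0 :=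
    ((contOn_cpow (1-p)).div_const (1-p)) 0 self_mem_Ici
  have htop : Tendsto (fun t : ℝ => ((1+t:ℝ):ℂ) ^ (1-p) / (1-p)) atTop (nhds 0) := by
    rw [tendsto_zero_iff_norm_tendsto_zero]
    have : ∀ᶠ t in (atTop : Filter ℝ), ‖((1+t:ℝ):ℂ) ^ (1-p) / (1-p)‖
        = (1+t) ^ ((1:ℝ)-p.re) / ‖(1:ℂ)-p‖ := by
      filter_upwards [eventually_gt_atTop (0:ℝ)] with t ht
      rw [norm_div, norm_cpow_real (by linarith)]
      simp
    rw [tendsto_congr' this]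
    have h1 : Tendsto (fun t : ℝ => (1+t) ^ ((1:ℝ)-p.re)) atTop (nhds 0) := by
      have h2 := (tendsto_rpow_neg_atTop (y := p.re - 1) (by linarith)).comp
        (tendsto_atTop_add_const_left atTop 1 tendsto_id)
      convert h2 using 2 with t
      simp only [Function.comp, id]
      congr 1
      ring
    simpa using h1.div_const ‖(1:ℂ)-p‖
  have := integral_Ioi_of_hasDerivAt_of_tendsto hcont
    (fun t ht => tail_hasDeriv p hne (by linarith [ht.out]))
    (tail_integrable p hp) htop
  rw [this]
  simp [Complex.one_cpow]
  rw [show (p-1:ℂ) = -(1-p) by ring, inv_neg]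
lemma contOn_cpow_Ioi (s : ℂ) : ContinuousOn (fun x : ℝ => (x:ℂ) ^ s) (Ioi 0) := by
  intro x hx
  apply ContinuousWithinAt.cpow
  · exact Complex.continuous_ofReal.continuousWithinAt
  · exact continuousWithinAt_const
  · exact Complex.ofReal_mem_slitPlane.2 hx

/-- Integrability of Mellin-type integrands from power bound near 0 and exp decay. -/
lemma mellin_type_integrable (g : ℝ → ℝ) (hgc : ContinuousOn g (Ioi 0))
    {B₀ B₁ c r : ℝ} (hc : 0 < c)
    (h0 : ∀ x : ℝ, 0 < x → x ≤ 1 → |g x| ≤ B₀ * x ^ r)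
    (h1 : ∀ x : ℝ, 1 ≤ x → |g x| ≤ B₁ * Real.exp (-c * x))
    (s : ℂ) (hs : -1 < s.re + r) :
    IntegrableOn (fun x : ℝ => (x:ℂ) ^ s * (g x : ℂ)) (Ioi 0) := by
  have hcont : ContinuousOn (fun x : ℝ => (x:ℂ) ^ s * (g x : ℂ)) (Ioi 0) :=
    (contOn_cpow_Ioi s).mul (Complex.continuous_ofReal.comp_continuousOn hgc)
  rw [show Ioi (0:ℝ) = Ioc 0 1 ∪ Ioi 1 by rw [Ioc_union_Ioi_eq_Ioi]; norm_num]
  apply IntegrableOn.union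
  · have hmaj : IntegrableOn (fun x : ℝ => B₀ * x ^ (s.re + r)) (Ioc (0:ℝ) 1) :=
      ((intervalIntegral.intervalIntegrable_rpow' hs).1).const_mul B₀
    apply Integrable.mono hmaj
      ((hcont.mono Ioc_subset_Ioi_self).aestronglyMeasurable measurableSet_Ioc)
    filter_upwards [ae_restrict_mem measurableSet_Ioc] with x hx
    have hx0 : (0:ℝ) < x := hx.1
    rw [norm_mul, norm_cpow_real hx0, Complex.norm_real, Real.norm_eq_abs]
    calc x ^ s.re * |g x| ≤ x ^ s.re * (B₀ * x ^ r) := by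
          apply mul_le_mul_of_nonneg_left (h0 x hx0 hx.2) (Real.rpow_nonneg hx0.le _)
      _ = B₀ * x ^ (s.re + r) := by rw [Real.rpow_add hx0]; ring
      _ ≤ ‖B₀ * x ^ (s.re + r)‖ := le_abs_self _
  · have hmaj : IntegrableOn (fun x : ℝ => B₁ * (x ^ (max s.re 0) * Real.exp (-c * x)))
        (Ioi (1:ℝ)) :=
      (((integrableOn_rpow_mul_exp_neg_mul_rpow (s := max s.re 0) (p := 1) (b := c)
        (lt_of_lt_of_le (by norm_num) (le_max_right _ _)) zero_lt_one hc).mono_set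
        (Ioi_subset_Ioi zero_le_one)).congr_fun
        (fun x hx => by rw [Real.rpow_one]) measurableSet_Ioi).const_mul B₁
    apply Integrable.mono hmaj
      ((hcont.mono fun x (hx : x ∈ Ioi (1:ℝ)) => lt_trans zero_lt_one hx.out).aestronglyMeasurable
        measurableSet_Ioi)
    filter_upwards [ae_restrict_mem measurableSet_Ioi] with x hx
    have hx1 : (1:ℝ) < x := hx
    have hx0 : (0:ℝ) < x := lt_trans zero_lt_one hx1
    rw [norm_mul, norm_cpow_real hx0, Complex.norm_real, Real.norm_eq_abs]
    calc x ^ s.re * |g x| ≤ x ^ (max s.re 0) * (B₁ * Real.exp (-c * x)) := by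
          apply mul_le_mul (Real.rpow_le_rpow_of_exponent_le hx1.le (le_max_left _ _))
            (h1 x hx1.le) (abs_nonneg _) (Real.rpow_nonneg hx0.le _)
      _ = B₁ * (x ^ (max s.re 0) * Real.exp (-c * x)) := by ring
      _ ≤ ‖B₁ * (x ^ (max s.re 0) * Real.exp (-c * x))‖ := le_abs_self _

lemma scale_cpow_integrableOn (g : ℝ → ℝ) (s : ℂ) {u : ℝ} (hu : 0 < u)
    (h : IntegrableOn (fun x : ℝ => (x:ℂ) ^ s * (g x : ℂ)) (Ioi 0)) :
    IntegrableOn (fun x : ℝ => (x:ℂ) ^ s * (g (u * x) : ℂ)) (Ioi 0) := by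
  have h2 : IntegrableOn (fun x : ℝ => ((u*x:ℝ):ℂ) ^ s * (g (u * x) : ℂ)) (Ioi 0) := by
    have := (integrableOn_Ioi_comp_mul_left_iff
      (fun y : ℝ => (y:ℂ) ^ s * (g y : ℂ)) 0 hu).2 (by simpa using h)
    simpa using this
  have h3 : IntegrableOn (fun x : ℝ => (u:ℂ) ^ (-s) * (((u*x:ℝ):ℂ) ^ s * (g (u * x) : ℂ)))
      (Ioi 0) := h2.const_mul ((u:ℂ) ^ (-s))
  apply h3.congr_fun ?_ measurableSet_Ioi
  intro x hx
  have hx0 : (0:ℝ) < x := hx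
  have hmul : ((u*x:ℝ):ℂ) ^ s = (u:ℂ) ^ s * (x:ℂ) ^ s := by
    rw [Complex.ofReal_mul]
    exact mul_cpow_ofReal_nonneg hu.le hx0.le s
  dsimp only
  rw [hmul, ← mul_assoc, ← mul_assoc, ← Complex.cpow_add _ _ (by exact_mod_cast hu.ne')]
  simp

lemma scale_cpow_integral (g : ℝ → ℝ) (s : ℂ) {u : ℝ} (hu : 0 < u) :
    (∫ x in Ioi (0:ℝ), (x:ℂ) ^ s * (g (u * x) : ℂ))
      = (u:ℂ) ^ (-(s+1)) * ∫ x in Ioi (0:ℝ), (x:ℂ) ^ s * (g x : ℂ) := by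
  have key := integral_comp_mul_left_Ioi (fun y : ℝ => (y:ℂ) ^ s * (g y : ℂ)) 0 hu
  simp only [mul_zero] at key
  have congr1 : (∫ x in Ioi (0:ℝ), (x:ℂ) ^ s * (g (u * x) : ℂ))
      = ∫ x in Ioi (0:ℝ), (u:ℂ) ^ (-s) * (((u*x:ℝ):ℂ) ^ s * (g (u*x) : ℂ)) := by
    apply setIntegral_congr_fun measurableSet_Ioi
    intro x hx
    have hx0 : (0:ℝ) < x := hx
    have hmul : ((u*x:ℝ):ℂ) ^ s = (u:ℂ) ^ s * (x:ℂ) ^ s := by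
      rw [Complex.ofReal_mul]
      exact mul_cpow_ofReal_nonneg hu.le hx0.le s
    dsimp only
    rw [hmul, ← mul_assoc, ← mul_assoc, ← Complex.cpow_add _ _ (by exact_mod_cast hu.ne')]
    simp
  rw [congr1, MeasureTheory.integral_const_mul, key, Complex.real_smul]
  rw [show ((u⁻¹ : ℝ):ℂ) = (u:ℂ) ^ (-1 : ℂ) by
    rw [Complex.cpow_neg_one]; push_cast; ring]
  rw [← mul_assoc, ← Complex.cpow_add _ _ (by exact_mod_cast hu.ne'),
    show -s + -1 = -(s+1) by ring]

lemma scale_rpow_integral (g : ℝ → ℝ) (r : ℝ) {u : ℝ} (hu : 0 < u) :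
    (∫ x in Ioi (0:ℝ), x ^ r * g (u * x))
      = u ^ (-(r+1)) * ∫ x in Ioi (0:ℝ), x ^ r * g x := by
  have key := integral_comp_mul_left_Ioi (fun y : ℝ => y ^ r * g y) 0 hu
  simp only [mul_zero] at key
  have congr1 : (∫ x in Ioi (0:ℝ), x ^ r * g (u * x))
      = ∫ x in Ioi (0:ℝ), u ^ (-r) * ((u*x) ^ r * g (u*x)) := by
    apply setIntegral_congr_fun measurableSet_Ioi
    intro x hx
    have hx0 : (0:ℝ) < x := hx
    dsimp only
    rw [Real.mul_rpow hu.le hx0.le, ← mul_assoc, ← mul_assoc,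
      ← Real.rpow_add hu]
    simp
  rw [congr1, MeasureTheory.integral_const_mul, key]
  rw [smul_eq_mul, ← Real.rpow_neg_one u, ← mul_assoc, ← Real.rpow_add hu,
    show -r + -1 = -(r+1) by ring]

lemma tail_integrable_real (q : ℝ) (hq : 1 < q) :
    IntegrableOn (fun t : ℝ => (1+t) ^ (-q)) (Ioi 0) := by
  have h : IntegrableOn (fun t : ℝ => ‖((1+t:ℝ):ℂ) ^ (-(q:ℂ))‖) (Ioi 0) :=
    (tail_integrable (q:ℂ) (by simpa using hq)).norm
  apply h.congr_fun ?_ measurableSet_Ioi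
  intro t ht
  have h1t : (0:ℝ) < 1 + t := by linarith [ht.out]
  dsimp only
  rw [norm_cpow_real h1t]
  simp

lemma scale_rpow_integrableOn (g : ℝ → ℝ) (r : ℝ) {u : ℝ} (hu : 0 < u)
    (h : IntegrableOn (fun x : ℝ => x ^ r * g x) (Ioi 0)) :
    IntegrableOn (fun x : ℝ => x ^ r * g (u * x)) (Ioi 0) := by
  have h2 : IntegrableOn (fun x : ℝ => (u*x) ^ r * g (u * x)) (Ioi 0) := by
    have := (integrableOn_Ioi_comp_mul_left_iff
      (fun y : ℝ => y ^ r * g y) 0 hu).2 (by simpa using h)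
    simpa using this
  have h3 : IntegrableOn (fun x : ℝ => u ^ (-r) * ((u*x) ^ r * g (u * x))) (Ioi 0) :=
    h2.const_mul (u ^ (-r))
  apply h3.congr_fun ?_ measurableSet_Ioi
  intro x hx
  have hx0 : (0:ℝ) < x := hx
  dsimp only
  rw [Real.mul_rpow hu.le hx0.le, ← mul_assoc, ← mul_assoc, ← Real.rpow_add hu]
  simp

end MellinGenAux

open MellinGenAux Set Filter Complex
/-- Mellin transform identity for the generator `A` of the distance process:
for `0 < β₁, β₂ < 1`, `κ = (1-β₁)(1+β₂)/(4β₂)`, `γ = (1+3β₂)/(2β₂)`,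
`ξ* = 1/(2β₁) - 1/(2β₂)`, and `f` a `C¹` function on `(0,∞)` which is bounded, satisfies
`|f'(x)| ≤ C/x` near `0` and decays exponentially (together with `f'`) near `∞`,
the Mellin transforms `M[Af](ξ)` and `M[f](ξ-1)` converge absolutely for `Re ξ > 1` and
`M[Af](ξ) = (β₁(ξ-1)(ξ-ξ*)/(ξ+γ-2)) M[f](ξ-1)`. -/
theorem mellin_generator (β₁ β₂ κ γ ξs : ℝ)
    (hβ₁ : 0 < β₁) (hβ₁' : β₁ < 1) (hβ₂ : 0 < β₂) (hβ₂' : β₂ < 1)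
    (hκ : κ = (1 - β₁) * (1 + β₂) / (4 * β₂))
    (hγ : γ = (1 + 3 * β₂) / (2 * β₂))
    (hξs : ξs = 1 / (2 * β₁) - 1 / (2 * β₂))
    (f f' : ℝ → ℝ)
    (hderiv : ∀ x ∈ Set.Ioi (0:ℝ), HasDerivAt f (f' x) x)
    (hcont : ContinuousOn f' (Set.Ioi 0))
    (C c : ℝ) (hC : 0 < C) (hc : 0 < c)
    (hfbd : ∀ x : ℝ, 0 < x → |f x| ≤ C)
    (hf'bd : ∀ x : ℝ, 0 < x → x ≤ 1 → |f' x| ≤ C / x)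
    (hdecay : ∀ x : ℝ, 1 ≤ x → |f x| + |f' x| ≤ C * Real.exp (-c * x))
    (Af : ℝ → ℝ)
    (hAf : ∀ x : ℝ, 0 < x → Af x =
      -β₁ * f' x + ∫ a in Set.Ioi (0:ℝ), (f (x + a) - f x) * (κ / x ^ 2 * (1 + a / x) ^ (-γ)))
    (ξ : ℂ) (hξ : 1 < ξ.re) :
    IntegrableOn (fun x : ℝ => (x:ℂ) ^ (ξ - 1) * (Af x : ℂ)) (Set.Ioi 0) ∧
    IntegrableOn (fun x : ℝ => (x:ℂ) ^ (ξ - 2) * (f x : ℂ)) (Set.Ioi 0) ∧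
    ∫ x in Set.Ioi (0:ℝ), (x:ℂ) ^ (ξ - 1) * (Af x : ℂ) =
      ((β₁:ℂ) * (ξ - 1) * (ξ - (ξs:ℂ)) / (ξ + (γ:ℂ) - 2)) *
        ∫ x in Set.Ioi (0:ℝ), (x:ℂ) ^ (ξ - 2) * (f x : ℂ) := by
  have hre2 : (ξ - 2).re = ξ.re - 2 := by simp
  have hre1 : (ξ - 1).re = ξ.re - 1 := by simp
  have hγ2 : 2 < γ := by
    rw [hγ, lt_div_iff₀ (by linarith)]; linarith
  have hκ0 : 0 < κ := by
    rw [hκ]; apply div_pos (by nlinarith) (by linarith)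
  have hfc : ContinuousOn f (Ioi 0) := fun x hx =>
    (hderiv x hx).continuousAt.continuousWithinAt
  have hfd : ∀ x : ℝ, 1 ≤ x → |f x| ≤ C * Real.exp (-c * x) := fun x hx =>
    le_trans (le_add_of_nonneg_right (abs_nonneg _)) (hdecay x hx)
  have hf'd : ∀ x : ℝ, 1 ≤ x → |f' x| ≤ C * Real.exp (-c * x) := fun x hx =>
    le_trans (le_add_of_nonneg_left (abs_nonneg _)) (hdecay x hx)
  have hbd0 : ∀ x : ℝ, 0 < x → x ≤ 1 → |f x| ≤ C * x ^ (0:ℝ) := by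
    intro x hx _; rw [Real.rpow_zero, mul_one]; exact hfbd x hx
  have hbd0' : ∀ x : ℝ, 0 < x → x ≤ 1 → |f' x| ≤ C * x ^ (-1:ℝ) := by
    intro x hx hx1
    rw [Real.rpow_neg_one, ← div_eq_mul_inv]
    exact hf'bd x hx hx1
  have hMint : IntegrableOn (fun x : ℝ => (x:ℂ) ^ (ξ-2) * (f x : ℂ)) (Ioi 0) :=
    mellin_type_integrable f hfc hc hbd0 hfd (ξ-2) (by rw [hre2]; linarith)
  have hM'int : IntegrableOn (fun x : ℝ => (x:ℂ) ^ (ξ-1) * (f' x : ℂ)) (Ioi 0) :=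
    mellin_type_integrable f' hcont hc hbd0' hf'd (ξ-1) (by rw [hre1]; linarith)
  set M : ℂ := ∫ x in Ioi (0:ℝ), (x:ℂ) ^ (ξ-2) * (f x : ℂ) with hM
  -- real absolute Mellin integral
  have hM₀int : IntegrableOn (fun x : ℝ => x ^ (ξ.re-2) * |f x|) (Ioi 0) := by
    have h : IntegrableOn (fun x : ℝ => ‖(x:ℂ) ^ (ξ-2) * (f x : ℂ)‖) (Ioi 0) := hMint.norm
    apply h.congr_fun ?_ measurableSet_Ioi
    intro x hx
    dsimp only
    rw [norm_mul, norm_cpow_real hx.out, Complex.norm_real, Real.norm_eq_abs, hre2]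
  set M₀ : ℝ := ∫ x in Ioi (0:ℝ), x ^ (ξ.re-2) * |f x| with hM₀
  have hM₀nonneg : 0 ≤ M₀ :=
    setIntegral_nonneg measurableSet_Ioi fun x hx =>
      mul_nonneg (Real.rpow_nonneg (le_of_lt hx) _) (abs_nonneg _)
  -- integration by parts
  have hξ1ne : ξ - 1 ≠ 0 := by
    intro h
    have := congrArg Complex.re h
    simp at this
    linarith
  have hf'eq : ∫ x in Ioi (0:ℝ), (x:ℂ) ^ (ξ-1) * (f' x : ℂ) = -((ξ-1) * M) := by
    set g : ℝ → ℂ := fun y => (y:ℂ) ^ (ξ-1) * (f y : ℂ) with hgdef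
    have hg0 : g 0 = 0 := by
      simp only [hgdef, Complex.ofReal_zero, Complex.zero_cpow hξ1ne, zero_mul]
    have hgderiv : ∀ x ∈ Ioi (0:ℝ), HasDerivAt g
        ((ξ-1) * ((x:ℂ) ^ (ξ-2) * (f x : ℂ)) + (x:ℂ) ^ (ξ-1) * (f' x : ℂ)) x := by
      intro x hx
      have h1 := hasDerivAt_ofReal_cpow_pos hx.out (ξ-1)
      have h2 := (hderiv x hx).ofReal_comp
      have h3 := h1.mul h2
      refine h3.congr_deriv ?_
      rw [show ξ-1-1 = ξ-2 by ring]
      ring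
    have hintsum : IntegrableOn (fun x : ℝ =>
        (ξ-1) * ((x:ℂ) ^ (ξ-2) * (f x : ℂ)) + (x:ℂ) ^ (ξ-1) * (f' x : ℂ)) (Ioi 0) :=
      (hMint.const_mul (ξ-1)).add hM'int
    have hcont0 : ContinuousWithinAt g (Ici 0) 0 := by
      rw [ContinuousWithinAt, hg0, tendsto_zero_iff_norm_tendsto_zero]
      apply squeeze_zero' (Eventually.of_forall fun y => norm_nonneg _)
      · filter_upwards [eventually_mem_nhdsWithin,
          eventually_nhdsWithin_of_eventually_nhds
            (eventually_of_mem (Iio_mem_nhds zero_lt_one) (fun y hy => hy))] with y hy hy1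
        show ‖g y‖ ≤ C * y ^ (ξ.re - 1)
        rcases eq_or_lt_of_le (hy.out : (0:ℝ) ≤ y) with h | h
        · rw [← h, hg0]
          simp only [norm_zero]
          rw [Real.zero_rpow (ne_of_gt (by linarith))]
          simp
        · rw [hgdef]
          simp only
          rw [norm_mul, norm_cpow_real h, Complex.norm_real, Real.norm_eq_abs, hre1]
          calc y ^ (ξ.re-1) * |f y| ≤ y ^ (ξ.re-1) * C :=
                mul_le_mul_of_nonneg_left (hfbd y h) (Real.rpow_nonneg h.le _)
            _ = C * y ^ (ξ.re-1) := by ring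
      · have ht : Tendsto (fun y : ℝ => y ^ (ξ.re-1)) (nhdsWithin 0 (Ici 0)) (nhds 0) := by
          have h' := (Real.continuousAt_rpow_const 0 (ξ.re-1)
            (Or.inr (by linarith))).continuousWithinAt (s := Ici 0)
          rw [ContinuousWithinAt, Real.zero_rpow (ne_of_gt (by linarith))] at h'
          exact h'
        have := ht.const_mul C
        simpa using this
    have htop : Tendsto g atTop (nhds 0) := by
      rw [tendsto_zero_iff_norm_tendsto_zero]
      apply squeeze_zero' (Eventually.of_forall fun y => norm_nonneg _)
      · filter_upwards [eventually_ge_atTop (1:ℝ)] with y hy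
        have hy0 : (0:ℝ) < y := by linarith
        show ‖g y‖ ≤ C * (y ^ (ξ.re-1) * Real.exp (-c * y))
        rw [hgdef]
        simp only
        rw [norm_mul, norm_cpow_real hy0, Complex.norm_real, Real.norm_eq_abs, hre1]
        calc y ^ (ξ.re-1) * |f y| ≤ y ^ (ξ.re-1) * (C * Real.exp (-c*y)) :=
              mul_le_mul_of_nonneg_left (hfd y hy) (Real.rpow_nonneg hy0.le _)
          _ = C * (y ^ (ξ.re-1) * Real.exp (-c * y)) := by ring
      · have := (tendsto_rpow_mul_exp_neg_mul_atTop_nhds_zero (ξ.re-1) c hc).const_mul C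
        simpa using this
    have hFTC := integral_Ioi_of_hasDerivAt_of_tendsto hcont0 hgderiv hintsum htop
    rw [hg0, sub_zero] at hFTC
    have hadd := integral_add (hMint.const_mul (ξ-1)) hM'int
    rw [hFTC] at hadd
    rw [MeasureTheory.integral_const_mul] at hadd
    rw [← hM] at hadd
    linear_combination -hadd
  -- the kernel function
  set F : ℝ → ℝ → ℂ := fun x t =>
    (x:ℂ) ^ (ξ-2) * (((f ((1+t)*x) : ℝ) : ℂ) - ((f x : ℝ) : ℂ)) * (((1+t) ^ (-γ) : ℝ) : ℂ)
    with hFdef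
  have hslice : ∀ t : ℝ, 0 < t → IntegrableOn (fun x => F x t) (Ioi 0) := by
    intro t ht
    have h1t : (0:ℝ) < 1 + t := by linarith
    have hi1 : IntegrableOn (fun x : ℝ => (x:ℂ) ^ (ξ-2) * (f ((1+t) * x) : ℂ)) (Ioi 0) :=
      scale_cpow_integrableOn f (ξ-2) h1t hMint
    have h2 : IntegrableOn (fun x : ℝ =>
        ((x:ℂ) ^ (ξ-2) * (f ((1+t) * x) : ℂ) - (x:ℂ) ^ (ξ-2) * (f x : ℂ))
          * (((1+t) ^ (-γ) : ℝ) : ℂ)) (Ioi 0) := (hi1.sub hMint).mul_const _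
    apply h2.congr_fun ?_ measurableSet_Ioi
    intro x hx
    simp only [hFdef]
    ring
  have hFprod : Integrable (fun p : ℝ × ℝ => F p.1 p.2)
      ((volume.restrict (Ioi 0)).prod (volume.restrict (Ioi 0))) := by
    have hFcont : ContinuousOn (fun p : ℝ × ℝ => F p.1 p.2) (Ioi 0 ×ˢ Ioi 0) := by
      simp only [hFdef]
      apply ContinuousOn.mul
      · apply ContinuousOn.mul
        · exact (contOn_cpow_Ioi (ξ-2)).comp continuous_fst.continuousOn fun p hp => hp.1
        · apply ContinuousOn.sub
          · apply Complex.continuous_ofReal.comp_continuousOn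
            apply hfc.comp ((continuous_const.add continuous_snd).mul
              continuous_fst).continuousOn
            intro p hp
            exact mul_pos (by have := mem_Ioi.1 hp.2; show (0:ℝ) < 1 + p.2; linarith) hp.1
          · exact Complex.continuous_ofReal.comp_continuousOn
              (hfc.comp continuous_fst.continuousOn fun p hp => hp.1)
      · apply Complex.continuous_ofReal.comp_continuousOn
        apply ContinuousOn.rpow_const (continuous_const.add continuous_snd).continuousOn
        intro p hp
        exact Or.inl (by have := mem_Ioi.1 hp.2; intro h; change 1 + p.2 = 0 at h; linarith)
    have hmeasF : AEStronglyMeasurable (fun p : ℝ × ℝ => F p.1 p.2)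
        ((volume.restrict (Ioi 0)).prod (volume.restrict (Ioi 0))) := by
      rw [Measure.prod_restrict]
      exact hFcont.aestronglyMeasurable (measurableSet_Ioi.prod measurableSet_Ioi)
    rw [integrable_prod_iff' hmeasF]
    constructor
    · filter_upwards [ae_restrict_mem measurableSet_Ioi] with t ht
      exact hslice t ht
    · have hAESM : AEStronglyMeasurable
          (fun t : ℝ => ∫ x in Ioi (0:ℝ), ‖F x t‖) (volume.restrict (Ioi 0)) :=
        hmeasF.norm.prod_swap.integral_prod_right'
      have hmaj : IntegrableOn
          (fun t : ℝ => M₀ * ((1+t) ^ (-(γ+(ξ.re-1))) + (1+t) ^ (-γ))) (Ioi 0) :=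
        ((tail_integrable_real _ (by linarith)).add
          (tail_integrable_real _ (by linarith))).const_mul M₀
      apply Integrable.mono hmaj hAESM
      filter_upwards [ae_restrict_mem measurableSet_Ioi] with t ht
      have ht0 : (0:ℝ) < t := ht
      have h1t : (0:ℝ) < 1 + t := by linarith
      have hscale_int : IntegrableOn
          (fun x : ℝ => x ^ (ξ.re-2) * |f ((1+t) * x)|) (Ioi 0) :=
        scale_rpow_integrableOn (fun y => |f y|) (ξ.re-2) h1t hM₀int
      have hbound : (∫ x in Ioi (0:ℝ), ‖F x t‖)
          ≤ M₀ * ((1+t) ^ (-(γ+(ξ.re-1))) + (1+t) ^ (-γ)) := by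
        have hg_int : IntegrableOn (fun x : ℝ =>
            (x ^ (ξ.re-2) * |f ((1+t) * x)| + x ^ (ξ.re-2) * |f x|) * (1+t) ^ (-γ))
            (Ioi 0) := (hscale_int.add hM₀int).mul_const _
        have hae : (fun x : ℝ => ‖F x t‖) ≤ᵐ[volume.restrict (Ioi 0)]
            (fun x : ℝ => (x ^ (ξ.re-2) * |f ((1+t) * x)| + x ^ (ξ.re-2) * |f x|)
              * (1+t) ^ (-γ)) := by
          filter_upwards [ae_restrict_mem measurableSet_Ioi] with x hx
          have hx0 : (0:ℝ) < x := hx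
          have hnorm : ‖F x t‖
              = x ^ (ξ.re-2) * |f ((1+t) * x) - f x| * (1+t) ^ (-γ) := by
            simp only [hFdef]
            rw [norm_mul, norm_mul, norm_cpow_real hx0, hre2, ← Complex.ofReal_sub,
              Complex.norm_real, Complex.norm_real, Real.norm_eq_abs, Real.norm_eq_abs,
              _root_.abs_of_nonneg (Real.rpow_nonneg h1t.le ((-γ):ℝ))]
          rw [hnorm]
          apply mul_le_mul_of_nonneg_right ?_ (Real.rpow_nonneg h1t.le _)
          calc x ^ (ξ.re-2) * |f ((1+t) * x) - f x|
              ≤ x ^ (ξ.re-2) * (|f ((1+t) * x)| + |f x|) :=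
                mul_le_mul_of_nonneg_left (abs_sub _ _) (Real.rpow_nonneg hx0.le _)
            _ = x ^ (ξ.re-2) * |f ((1+t) * x)| + x ^ (ξ.re-2) * |f x| := by ring
        have hle := integral_mono_of_nonneg
          (Eventually.of_forall fun x => norm_nonneg _) hg_int hae
        refine le_trans hle (le_of_eq ?_)
        rw [MeasureTheory.integral_mul_const, integral_add hscale_int hM₀int,
          scale_rpow_integral (fun y => |f y|) (ξ.re-2) h1t, ← hM₀,
          show -(ξ.re-2+1) = -(ξ.re-1) by ring,
          show -(γ+(ξ.re-1)) = -(ξ.re-1) + -γ by ring, Real.rpow_add h1t]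
        ring
      rw [Real.norm_of_nonneg (integral_nonneg fun x => norm_nonneg _),
        Real.norm_of_nonneg (mul_nonneg hM₀nonneg (add_nonneg
          (Real.rpow_nonneg h1t.le _) (Real.rpow_nonneg h1t.le _)))]
      exact hbound
  have hmarg : IntegrableOn (fun x : ℝ => ∫ t in Ioi (0:ℝ), F x t) (Ioi 0) := by
    exact hFprod.integral_prod_left
  -- pointwise identity for the generator integrand
  have hAfx : ∀ x ∈ Ioi (0:ℝ), (x:ℂ) ^ (ξ-1) * (Af x : ℂ) =
      (-β₁ : ℂ) * ((x:ℂ) ^ (ξ-1) * (f' x : ℂ)) + (κ:ℂ) * ∫ t in Ioi (0:ℝ), F x t := by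
    intro x hx
    have hx0 : (0:ℝ) < x := hx
    have hxc : (x:ℂ) ≠ 0 := by exact_mod_cast hx0.ne'
    -- substitution in the jump integral
    have hsub := integral_comp_mul_left_Ioi
      (fun a : ℝ => (f (x + a) - f x) * (κ / x ^ 2 * (1 + a / x) ^ (-γ))) 0 hx0
    simp only [mul_zero] at hsub
    have hJ : (∫ a in Ioi (0:ℝ), (f (x + a) - f x) * (κ / x ^ 2 * (1 + a / x) ^ (-γ)))
        = (κ / x) * ∫ t in Ioi (0:ℝ), (f ((1+t) * x) - f x) * (1+t) ^ (-γ) := by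
      have h2 : (∫ a in Ioi (0:ℝ), (f (x + a) - f x) * (κ / x ^ 2 * (1 + a / x) ^ (-γ)))
          = x * ∫ t in Ioi (0:ℝ),
              (f (x + x * t) - f x) * (κ / x ^ 2 * (1 + (x * t) / x) ^ (-γ)) := by
        rw [hsub, smul_eq_mul, ← mul_assoc, mul_inv_cancel₀ hx0.ne', one_mul]
      rw [h2]
      have hcongr : ∀ t ∈ Ioi (0:ℝ),
          (f (x + x * t) - f x) * (κ / x ^ 2 * (1 + (x * t) / x) ^ (-γ))
            = (κ / x ^ 2) * ((f ((1+t) * x) - f x) * (1+t) ^ (-γ)) := by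
        intro t _
        rw [mul_div_cancel_left₀ t hx0.ne', show x + x * t = (1+t) * x by ring]
        ring
      rw [setIntegral_congr_fun measurableSet_Ioi hcongr, MeasureTheory.integral_const_mul]
      field_simp
    -- now the complex identity
    rw [hAf x hx0, hJ]
    push_cast
    have hFt : ∀ t ∈ Ioi (0:ℝ), F x t
        = (x:ℂ) ^ (ξ-2) * (((f ((1+t) * x) - f x) * (1+t) ^ (-γ) : ℝ) : ℂ) := by
      intro t _
      simp only [hFdef]
      push_cast
      ring
    have hIOR : (∫ t in Ioi (0:ℝ), (((f ((1+t) * x) - f x) * (1+t) ^ (-γ) : ℝ) : ℂ))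
        = (((∫ t in Ioi (0:ℝ), (f ((1+t) * x) - f x) * (1+t) ^ (-γ)) : ℝ) : ℂ) :=
      integral_ofReal
    rw [setIntegral_congr_fun measurableSet_Ioi hFt, MeasureTheory.integral_const_mul, hIOR]
    have hxpow : (x:ℂ) ^ (ξ-1) = (x:ℂ) ^ (ξ-2) * (x:ℂ) := by
      rw [show ξ-1 = (ξ-2) + 1 by ring, Complex.cpow_add _ _ hxc, Complex.cpow_one]
    rw [hxpow]
    generalize (∫ t in Ioi (0:ℝ), (f ((1+t) * x) - f x) * (1+t) ^ (-γ)) = I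
    field_simp
  have hAfint : IntegrableOn (fun x : ℝ => (x:ℂ) ^ (ξ-1) * (Af x : ℂ)) (Ioi 0) := by
    apply IntegrableOn.congr_fun ((hM'int.const_mul (-β₁ : ℂ)).add (hmarg.const_mul (κ:ℂ)))
      ?_ measurableSet_Ioi
    intro x hx
    exact (hAfx x hx).symm
  refine ⟨hAfint, hMint, ?_⟩
  -- inner integral evaluation
  have hinner : ∀ t ∈ Ioi (0:ℝ), (∫ x in Ioi (0:ℝ), F x t) =
      M * (((1+t:ℝ):ℂ) ^ (-(ξ-1+γ)) - ((1+t:ℝ):ℂ) ^ (-(γ:ℂ))) := by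
    intro t ht
    have ht0 : (0:ℝ) < t := ht
    have h1t : (0:ℝ) < 1 + t := by linarith
    have h1tc : ((1+t:ℝ):ℂ) ≠ 0 := by exact_mod_cast h1t.ne'
    have hi1 : IntegrableOn (fun x : ℝ => (x:ℂ) ^ (ξ-2) * (f ((1+t) * x) : ℂ)) (Ioi 0) :=
      scale_cpow_integrableOn f (ξ-2) h1t hMint
    have hFsplit : (∫ x in Ioi (0:ℝ), F x t)
        = (∫ x in Ioi (0:ℝ), ((x:ℂ) ^ (ξ-2) * (f ((1+t) * x) : ℂ)
            - (x:ℂ) ^ (ξ-2) * (f x : ℂ))) * (((1+t) ^ (-γ) : ℝ) : ℂ) := by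
      rw [← MeasureTheory.integral_mul_const]
      apply setIntegral_congr_fun measurableSet_Ioi
      intro x _
      simp only [hFdef]
      ring
    rw [hFsplit, integral_sub hi1 hMint, scale_cpow_integral f (ξ-2) h1t, ← hM]
    have hofReal : (((1+t) ^ (-γ) : ℝ) : ℂ) = ((1+t:ℝ):ℂ) ^ (-(γ:ℂ)) := by
      rw [Complex.ofReal_cpow h1t.le]
      push_cast
      ring_nf
    rw [hofReal, show -(ξ-2+1) = -(ξ-1) by ring]
    have hcp : ((1+t:ℝ):ℂ) ^ (-(ξ-1+γ))
        = ((1+t:ℝ):ℂ) ^ (-(ξ-1)) * ((1+t:ℝ):ℂ) ^ (-(γ:ℂ)) := by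
      rw [← Complex.cpow_add _ _ h1tc]
      congr 1
      push_cast
      ring
    rw [hcp]
    ring
  have houter : ∫ t in Ioi (0:ℝ), (∫ x in Ioi (0:ℝ), F x t) =
      M * (1/(ξ+(γ:ℂ)-2) - 1/((γ:ℂ)-1)) := by
    have hp1 : 1 < (ξ-1+(γ:ℂ)).re := by
      simp only [Complex.add_re, Complex.sub_re, Complex.one_re, Complex.ofReal_re]
      linarith
    have hp2 : 1 < ((γ:ℂ)).re := by simp; linarith
    rw [setIntegral_congr_fun measurableSet_Ioi hinner]
    rw [MeasureTheory.integral_const_mul,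
      integral_sub (tail_integrable _ hp1) (tail_integrable _ hp2),
      tail_integral _ hp1, tail_integral _ hp2]
    rw [show ξ-1+(γ:ℂ)-1 = ξ+(γ:ℂ)-2 by ring]
  have hswap : ∫ x in Ioi (0:ℝ), (∫ t in Ioi (0:ℝ), F x t) =
      ∫ t in Ioi (0:ℝ), (∫ x in Ioi (0:ℝ), F x t) :=
    integral_integral_swap hFprod
  have hsplit : ∫ x in Ioi (0:ℝ), (x:ℂ) ^ (ξ - 1) * (Af x : ℂ) =
      (-β₁ : ℂ) * (∫ x in Ioi (0:ℝ), (x:ℂ) ^ (ξ-1) * (f' x : ℂ))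
        + (κ:ℂ) * ∫ x in Ioi (0:ℝ), (∫ t in Ioi (0:ℝ), F x t) := by
    rw [setIntegral_congr_fun measurableSet_Ioi hAfx,
      integral_add (hM'int.const_mul (-β₁ : ℂ)) (hmarg.const_mul (κ:ℂ)),
      MeasureTheory.integral_const_mul, MeasureTheory.integral_const_mul]
  rw [hsplit, hf'eq, hswap, houter]
  -- final algebra
  have hne1 : (ξ + (γ:ℂ) - 2) ≠ 0 := by
    intro h
    have := congrArg Complex.re h
    simp at this
    linarith
  have hne2 : ((γ:ℂ) - 1) ≠ 0 := by
    intro h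
    have := congrArg Complex.re h
    simp at this
    linarith
  have hrealkey : β₁ * ((γ-1) * (γ-2+ξs)) = κ := by
    rw [hκ, hγ, hξs]
    field_simp
    ring
  have hkey : (β₁:ℂ) * (((γ:ℂ)-1) * ((γ:ℂ)-2+(ξs:ℂ))) = (κ:ℂ) := by
    exact_mod_cast congrArg (fun r : ℝ => (r:ℂ)) hrealkey
  rw [← hkey]
  field_simp
  ring
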